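/- Let t ∈ (0,1) and let Q_0,…,Q_n be the points computed by the new algorithm for the rational Bézier curve R_n at parameter t. For u ∈ (0,1), the point R_n(u) lies in the convex hull of {Q_0,…,Q_n} if u ≤ t. -/

import Mathlib

open Finset

def bern (n k : ℕ) (t : ℝ) : ℝ := (n.choose k : ℝ) * t ^ k * (1 - t) ^ (n - k)

lemma bern_pos {n k : ℕ} {t : ℝ} (hk : k ≤ n) (ht : t ∈ Set.Ioo (0:ℝ) 1) :
    0 < bern n k t := by
  unfold bern
  have := Nat.choose_pos hk
  have h1 : (0:ℝ) < t := ht.1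
  have h2 : (0:ℝ) < 1 - t := by linarith [ht.2]
  positivity

lemma bern_step (n k : ℕ) (t : ℝ) (hk : k + 1 ≤ n) :
    ((k+1 : ℕ) : ℝ) * (1 - t) * bern n (k+1) t
      = t * ((n - (k+1) + 1 : ℕ) : ℝ) * bern n k t := by
  have h1 : n - (k+1) + 1 = n - k := by omega
  have h2 : ((n.choose (k+1)) : ℝ) * ((k+1:ℕ):ℝ) = (n.choose k : ℝ) * ((n - k : ℕ) : ℝ) := by
    exact_mod_cast congrArg (Nat.cast (R := ℝ)) (Nat.choose_succ_right_eq n k)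
  have h3 : (1-t)^(n-k) = (1-t)^(n-(k+1)) * (1-t) := by
    rw [← pow_succ, h1]
  unfold bern
  rw [h1, h3]
  push_cast at h2 ⊢
  linear_combination ((1-t)^(n-(k+1)) * (1-t) * t^k * t) * h2

lemma abel (N : ℕ) (r a : ℕ → ℝ) :
    ∑ k ∈ range N, (r k - r (k+1)) * (∑ j ∈ range (k+1), a j)
      = (∑ k ∈ range N, r k * a k) - r N * ∑ j ∈ range N, a j := by
  induction N with
  | zero => simp
  | succ N ih =>
    rw [sum_range_succ, ih, sum_range_succ (fun k => r k * a k) N, sum_range_succ a N]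
    ring

lemma bern_ratio_mono {n k : ℕ} {t u : ℝ} (hk : k + 1 ≤ n)
    (ht : t ∈ Set.Ioo (0:ℝ) 1) (hu : u ∈ Set.Ioo (0:ℝ) 1) (hut : u ≤ t) :
    bern n (k+1) u / bern n (k+1) t ≤ bern n k u / bern n k t := by
  have hk' : k ≤ n := by omega
  rw [div_le_div_iff₀ (bern_pos hk ht) (bern_pos hk' ht)]
  have h1 : n - k = (n - (k+1)) + 1 := by omega
  unfold bern
  rw [h1, pow_succ (1-t), pow_succ (1-u), pow_succ t, pow_succ u]
  have key : u * (1 - t) ≤ t * (1 - u) := by nlinarith [hu.1, ht.2]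
  have hA : (0:ℝ) ≤ (n.choose (k+1) : ℝ) * (n.choose k : ℝ) * u^k * t^k *
      (1-u)^(n-(k+1)) * (1-t)^(n-(k+1)) := by
    have h2 : (0:ℝ) ≤ 1-u := by linarith [hu.2]
    have h3 : (0:ℝ) ≤ 1-t := by linarith [ht.2]
    have h4 : (0:ℝ) ≤ u := le_of_lt hu.1
    have h5 : (0:ℝ) ≤ t := le_of_lt ht.1
    exact mul_nonneg (mul_nonneg (mul_nonneg (mul_nonneg (mul_nonneg
      (by positivity) (by positivity)) (pow_nonneg h4 _)) (pow_nonneg h5 _))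
      (pow_nonneg h2 _)) (pow_nonneg h3 _)
  nlinarith [mul_le_mul_of_nonneg_left key hA]

theorem stmt15 (n d : ℕ) (t u : ℝ) (ht : t ∈ Set.Ioo (0 : ℝ) 1)
    (hu : u ∈ Set.Ioo (0 : ℝ) 1) (hut : u ≤ t)
    (ω : ℕ → ℝ) (W : ℕ → Fin d → ℝ) (hω : ∀ k ≤ n, 0 < ω k)
    (h : ℕ → ℝ) (Q : ℕ → Fin d → ℝ)
    (hh0 : h 0 = 1) (hQ0 : Q 0 = W 0)
    (hh : ∀ k, 1 ≤ k → k ≤ n →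
      h k = ω k * h (k - 1) * t * ((n - k + 1 : ℕ) : ℝ) /
        (ω (k - 1) * (k : ℝ) * (1 - t) +
          ω k * h (k - 1) * t * ((n - k + 1 : ℕ) : ℝ)))
    (hQ : ∀ k, 1 ≤ k → k ≤ n → Q k = (1 - h k) • Q (k - 1) + h k • W k) :
    (∑ k ∈ range (n + 1), ω k * bern n k u)⁻¹ •
        ∑ k ∈ range (n + 1), (ω k * bern n k u) • W k ∈
      convexHull ℝ (Q '' Set.Iic n) := by
  set D : ℕ → ℝ := fun k => ∑ j ∈ range (k+1), ω j * bern n j t with hDdef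
  have hDpos : ∀ k ≤ n, 0 < D k := by
    intro k hk
    apply sum_pos
    · intro j hj
      have hj' := mem_range.mp hj
      exact mul_pos (hω j (by omega)) (bern_pos (by omega) ht)
    · exact ⟨0, by simp⟩
  have hDsucc : ∀ k, D (k+1) = D k + ω (k+1) * bern n (k+1) t := fun k => sum_range_succ _ _
  -- closed form for h
  have hval : ∀ k ≤ n, h k = ω k * bern n k t / D k := by
    intro k
    induction k with
    | zero =>
      intro _
      have hD0 : D 0 = ω 0 * bern n 0 t := by simp [hDdef]
      rw [hh0, hD0, div_self (ne_of_gt (mul_pos (hω 0 (Nat.zero_le n)) (bern_pos (Nat.zero_le n) ht)))]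
    | succ k ih =>
      intro hk
      have hk' : k ≤ n := by omega
      have ihv := ih hk'
      have key := bern_step n k t hk
      have hDk := hDpos k hk'
      have hDk1 := hDpos (k+1) hk
      have hden : (0:ℝ) < ω k * ((k:ℝ)+1) * (1 - t) +
          ω (k+1) * (ω k * bern n k t / D k) * t * ((n - (k+1) + 1 : ℕ) : ℝ) := by
        have h1 : (0:ℝ) < ω k * ((k:ℝ)+1) * (1-t) := by
          have : (0:ℝ) < 1 - t := by linarith [ht.2]
          have := hω k hk'
          positivity
        have h2 : (0:ℝ) < ω (k+1) * (ω k * bern n k t / D k) * t * ((n - (k+1) + 1 : ℕ) : ℝ) := by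
          have hB := bern_pos hk' ht
          have hω1 := hω (k+1) hk
          have hω0 := hω k hk'
          have hc : (0:ℝ) < ((n - (k+1) + 1 : ℕ) : ℝ) := by positivity
          have := ht.1
          positivity
        linarith
      have hD2 : (0:ℝ) < D k + ω (k+1) * bern n (k+1) t := by
        rw [← hDsucc]; exact hDk1
      have e : ((n - (k+1) + 1 : ℕ):ℝ) = (n:ℝ) - k := by
        have h9 : n - (k+1) + 1 = n - k := by omega
        rw [h9, Nat.cast_sub hk']
      rw [e] at key hden
      rw [hh (k+1) (by omega) hk, Nat.add_sub_cancel, ihv, hDsucc]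
      push_cast [e]
      push_cast at hden key
      rw [div_eq_div_iff (ne_of_gt hden) (ne_of_gt hD2)]
      field_simp
      linear_combination (-(ω (k+1) * ω k * D k)) * key
  -- closed form for Q (pointwise)
  have hQval : ∀ k ≤ n, ∀ i, D k * Q k i
      = ∑ j ∈ range (k+1), ω j * bern n j t * W j i := by
    intro k
    induction k with
    | zero =>
      intro _ i
      rw [hQ0]
      simp [hDdef, sum_range_one]
    | succ k ih =>
      intro hk i
      have hk' : k ≤ n := by omega
      have hQpt : Q (k+1) i = (1 - h (k+1)) * Q k i + h (k+1) * W (k+1) i := by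
        have := congrFun (hQ (k+1) (by omega) hk) i
        simpa using this
      have hB1 := bern_pos hk ht
      have hDk := hDpos k hk'
      have hDk1 := hDpos (k+1) hk
      rw [sum_range_succ, ← ih hk' i, hQpt, hval (k+1) hk, hDsucc]
      have hne : D k + ω (k+1) * bern n (k+1) t ≠ 0 := by
        rw [← hDsucc]; exact ne_of_gt hDk1
      field_simp
      ring
  -- the coefficients
  set r : ℕ → ℝ := fun k => if k ≤ n then bern n k u / bern n k t else 0 with hrdef
  set w : ℕ → ℝ := fun k => (r k - r (k+1)) * D k with hwdef
  have hrnonneg : ∀ k, 0 ≤ r k := by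
    intro k
    simp only [hrdef]
    split
    · exact div_nonneg (le_of_lt (bern_pos (by assumption) hu)) (le_of_lt (bern_pos (by assumption) ht))
    · exact le_refl 0
  have hrmono : ∀ k, r (k+1) ≤ r k := by
    intro k
    by_cases hkn : k + 1 ≤ n
    · simp only [hrdef, if_pos hkn, if_pos (by omega : k ≤ n)]
      exact bern_ratio_mono hkn ht hu hut
    · simp only [hrdef, if_neg hkn]
      exact hrnonneg k
  have hwnonneg : ∀ k ∈ range (n+1), 0 ≤ w k := by
    intro k hk
    have hk' : k ≤ n := by have := mem_range.mp hk; omega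
    exact mul_nonneg (by linarith [hrmono k]) (le_of_lt (hDpos k hk'))
  have hrtop : r (n+1) = 0 := by simp [hrdef]
  have hrB : ∀ k ≤ n, r k * (ω k * bern n k t) = ω k * bern n k u := by
    intro k hk
    simp only [hrdef, if_pos hk]
    field_simp [ne_of_gt (bern_pos hk ht)]
  have hsum : ∑ k ∈ range (n+1), w k = ∑ k ∈ range (n+1), ω k * bern n k u := by
    simp only [hwdef, hDdef]
    rw [abel (n+1) r (fun j => ω j * bern n j t), hrtop, zero_mul, sub_zero]
    refine sum_congr rfl fun k hk => ?_
    have hk' : k ≤ n := by have := mem_range.mp hk; omega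
    rw [← hrB k hk']
  have hvec : ∀ i, ∑ k ∈ range (n+1), w k * Q k i
      = ∑ k ∈ range (n+1), (ω k * bern n k u) * W k i := by
    intro i
    have step1 : ∑ k ∈ range (n+1), w k * Q k i
        = ∑ k ∈ range (n+1), (r k - r (k+1)) * (∑ j ∈ range (k+1), ω j * bern n j t * W j i) := by
      refine sum_congr rfl fun k hk => ?_
      have hk' : k ≤ n := by have := mem_range.mp hk; omega
      rw [← hQval k hk' i, hwdef]
      ring
    rw [step1, abel (n+1) r (fun j => ω j * bern n j t * W j i), hrtop, zero_mul, sub_zero]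
    refine sum_congr rfl fun k hk => ?_
    have hk' : k ≤ n := by have := mem_range.mp hk; omega
    rw [← hrB k hk']
    ring
  have hS : (0:ℝ) < ∑ k ∈ range (n+1), ω k * bern n k u := by
    apply sum_pos
    · intro j hj
      have := mem_range.mp hj
      exact mul_pos (hω j (by omega)) (bern_pos (by omega) hu)
    · exact ⟨0, by simp⟩
  have hveq : ∑ k ∈ range (n+1), (ω k * bern n k u) • W k
      = ∑ k ∈ range (n+1), w k • Q k := by
    funext i
    have := (hvec i).symm
    simpa [Finset.sum_apply, Pi.smul_apply, smul_eq_mul] using this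
  have hz : ∀ k ∈ range (n+1), Q k ∈ Q '' Set.Iic n := by
    intro k hk
    exact ⟨k, by simpa using Nat.lt_succ_iff.mp (mem_range.mp hk), rfl⟩
  have hmem := Finset.centerMass_mem_convexHull (range (n+1)) hwnonneg
    (by rw [hsum]; exact hS) hz
  rw [Finset.centerMass, hsum] at hmem
  rw [hveq]
  exact hmem
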